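/- Let F be an algebraically closed field of characteristic 0 and let Ẑ denote the profinite completion of ℤ (equivalently, the product over all primes p of the p-adic integers ℤ_p, as an additive group). Suppose 0 → Ẑ →(i_H) H →(ex_H) F^× → 1 and 0 → Ẑ →(i_G) G →(ex_G) F^× → 1 are exact sequences of abelian groups in which both H and G are divisible and torsion-free. Then there exists a group isomorphism σ : H → G such that ex_H = ex_G ∘ σ. -/

import Mathlib

noncomputable section

instance (p : Nat.Primes) : Fact (p : ℕ).Prime := ⟨p.2⟩

/-- The profinite completion of `ℤ`, realized as the product over all primes `p` of the
`p`-adic integers, as an additive group. -/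
def Zhat : Type := Π p : Nat.Primes, ℤ_[p]

instance : AddCommGroup Zhat := by unfold Zhat; infer_instance



namespace ZhatAux

lemma smul_apply (n : ℕ) (w : Zhat) (p : Nat.Primes) : (n • w) p = n • (w p) := rfl
lemma sub_apply (u v : Zhat) (p : Nat.Primes) : (u - v) p = u p - v p := rfl

lemma zhat_ext {u v : Zhat} (h : ∀ p, u p = v p) : u = v := funext h

-- norm/dvd helper
lemma dvd_of_norm_le {p : ℕ} [Fact p.Prime] (x : ℤ_[p]) (n : ℕ)
    (h : ‖x‖ ≤ (p:ℝ) ^ (-n : ℤ)) : (p:ℤ_[p])^n ∣ x := by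
  rw [PadicInt.norm_le_pow_iff_mem_span_pow, Ideal.mem_span_singleton] at h
  exact h

lemma norm_le_of_dvd {p : ℕ} [Fact p.Prime] (x : ℤ_[p]) (n : ℕ)
    (h : (p:ℤ_[p])^n ∣ x) : ‖x‖ ≤ (p:ℝ) ^ (-n : ℤ) := by
  rw [PadicInt.norm_le_pow_iff_mem_span_pow, Ideal.mem_span_singleton]
  exact h

/-- an element of Zhat divisible by every positive natural is zero -/
lemma eq_zero_of_forall_dvd (z : Zhat) (h : ∀ n : ℕ, 0 < n → ∃ w : Zhat, z = n • w) :
    z = 0 := by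
  apply zhat_ext
  intro p
  have hnorm : ∀ k : ℕ, ‖z p‖ ≤ (p:ℝ) ^ (-k : ℤ) := by
    intro k
    obtain ⟨w, hw⟩ := h ((p:ℕ)^k) (pow_pos p.2.pos k)
    apply norm_le_of_dvd
    refine ⟨w p, ?_⟩
    have : z p = ((p:ℕ)^k • w) p := by rw [← hw]
    rw [this, smul_apply, nsmul_eq_mul]
    push_cast
    ring
  have h0 : ‖z p‖ = 0 := by
    have hp1 : (1:ℝ) < (p:ℝ) := by exact_mod_cast p.2.one_lt
    have hr : |(p:ℝ)⁻¹| < 1 := by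
      rw [abs_of_pos (by positivity)]
      exact inv_lt_one_of_one_lt₀ hp1
    have htend : Filter.Tendsto (fun k : ℕ => ((p:ℝ)⁻¹)^k) Filter.atTop (nhds 0) :=
      tendsto_pow_atTop_nhds_zero_of_abs_lt_one hr
    have hle : ‖z p‖ ≤ 0 := by
      refine ge_of_tendsto' htend (fun k => ?_)
      have := hnorm k
      rwa [zpow_neg, zpow_natCast, ← inv_pow] at this
    exact le_antisymm hle (norm_nonneg _)
  show z p = 0
  simpa using norm_eq_zero.mp h0

open Filter in
lemma plim (p : Nat.Primes) (z : ℕ → Zhat)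
    (hz : ∀ m n : ℕ, 0 < m → 0 < n → m ∣ n → ∃ w : Zhat, z n - z m = m • w) :
    ∃ l : ℤ_[p], ∀ k : ℕ, ((p:ℕ):ℤ_[p])^k ∣ l - z ((p:ℕ)^k) p := by
  set a : ℕ → ℤ_[p] := fun k => z ((p:ℕ)^k) p with ha
  have key : ∀ j k : ℕ, k ≤ j → ((p:ℕ):ℤ_[p])^k ∣ a j - a k := by
    intro j k hkj
    obtain ⟨w, hw⟩ := hz ((p:ℕ)^k) ((p:ℕ)^j) (pow_pos p.2.pos k) (pow_pos p.2.pos j) (pow_dvd_pow _ hkj)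
    refine ⟨w p, ?_⟩
    have : (z ((p:ℕ)^j) - z ((p:ℕ)^k)) p = ((p:ℕ)^k • w) p := by rw [hw]
    rw [sub_apply, smul_apply, nsmul_eq_mul] at this
    rw [ha]
    simp only []
    rw [this]
    push_cast
    ring
  have hp1 : (1:ℝ) < ((p:ℕ):ℝ) := by exact_mod_cast p.2.one_lt
  have hcauchy : CauchySeq a := by
    apply cauchySeq_of_le_geometric (((p:ℕ):ℝ)⁻¹) 1 (inv_lt_one_of_one_lt₀ hp1)
    intro k
    rw [one_mul, dist_eq_norm]
    have h1 : ‖a k - a (k+1)‖ ≤ ((p:ℕ):ℝ) ^ (-k : ℤ) := by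
      apply norm_le_of_dvd
      have h2 := dvd_neg.mpr (key (k+1) k (by omega))
      rwa [neg_sub] at h2
    rwa [zpow_neg, zpow_natCast, ← inv_pow] at h1
  obtain ⟨l, hl⟩ := cauchySeq_tendsto_of_complete hcauchy
  refine ⟨l, fun k => ?_⟩
  have htd : Tendsto (fun j => ‖a j - a k‖) atTop (nhds ‖l - a k‖) :=
    ((hl.sub tendsto_const_nhds).norm)
  apply dvd_of_norm_le
  refine le_of_tendsto htd ?_
  filter_upwards [eventually_ge_atTop k] with j hj
  exact norm_le_of_dvd _ _ (key j k hj)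

lemma compatible_limit (z : ℕ → Zhat)
    (hz : ∀ m n : ℕ, 0 < m → 0 < n → m ∣ n → ∃ w : Zhat, z n - z m = m • w) :
    ∃ u : Zhat, ∀ n : ℕ, 0 < n → ∃ w : Zhat, u - z n = n • w := by
  have hplim := fun p => plim p z hz
  refine ⟨(fun p => Classical.choose (hplim p) : Π p : Nat.Primes, ℤ_[p]), ?_⟩
  intro n hn
  set u : Zhat := (fun p => Classical.choose (hplim p) : Π p : Nat.Primes, ℤ_[p]) with hu
  have main : ∀ p : Nat.Primes, ∃ c : ℤ_[p], (u - z n) p = ((n:ℕ):ℤ_[p]) * c := by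
    intro p
    set k : ℕ := n.factorization p with hk
    have hspec := Classical.choose_spec (hplim p) k
    -- p^k ∣ u p - z (p^k) p
    have d1 : ((p:ℕ):ℤ_[p])^k ∣ u p - z ((p:ℕ)^k) p := hspec
    have d2 : ((p:ℕ):ℤ_[p])^k ∣ z ((p:ℕ)^k) p - z (n * (p:ℕ)^k) p := by
      obtain ⟨w, hw⟩ := hz ((p:ℕ)^k) (n * (p:ℕ)^k) (pow_pos p.2.pos k) (Nat.mul_pos hn (pow_pos p.2.pos k)) (dvd_mul_left _ _)
      refine dvd_neg.mp ⟨w p, ?_⟩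
      have : (z (n * (p:ℕ)^k) - z ((p:ℕ)^k)) p = ((p:ℕ)^k • w) p := by rw [hw]
      rw [sub_apply, smul_apply, nsmul_eq_mul] at this
      rw [neg_sub, this]
      push_cast
      ring
    have d3 : ((p:ℕ):ℤ_[p])^k ∣ z (n * (p:ℕ)^k) p - z n p := by
      obtain ⟨w, hw⟩ := hz n (n * (p:ℕ)^k) hn (Nat.mul_pos hn (pow_pos p.2.pos k)) (dvd_mul_right _ _)
      have : (z (n * (p:ℕ)^k) - z n) p = (n • w) p := by rw [hw]
      rw [sub_apply, smul_apply, nsmul_eq_mul] at this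
      rw [this]
      have hdvd : ((p:ℕ)^k : ℕ) ∣ n := Nat.ordProj_dvd n p
      obtain ⟨m, hm⟩ := hdvd
      refine ⟨(m:ℤ_[p]) * w p, ?_⟩
      rw [hm]
      push_cast
      ring
    have dtot : ((p:ℕ):ℤ_[p])^k ∣ u p - z n p := by
      have : u p - z n p = (u p - z ((p:ℕ)^k) p) + (z ((p:ℕ)^k) p - z (n * (p:ℕ)^k) p)
          + (z (n * (p:ℕ)^k) p - z n p) := by ring
      rw [this]
      exact dvd_add (dvd_add d1 d2) d3
    -- now upgrade to n ∣
    obtain ⟨c, hc⟩ := dtot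
    set m : ℕ := n / (p:ℕ)^k with hm
    have hnm : (p:ℕ)^k * m = n := Nat.ordProj_mul_ordCompl_eq_self n p
    have hndvd : ¬ ((p:ℕ) ∣ m) := Nat.not_dvd_ordCompl p.2 (by omega)
    have hmunit : IsUnit ((m:ℕ):ℤ_[p]) := by
      rw [PadicInt.isUnit_iff]
      have hle : ‖((m:ℕ):ℤ_[p])‖ ≤ 1 := PadicInt.norm_le_one _
      have hlt : ¬ ‖((m:ℕ):ℤ_[p])‖ < 1 := by
        intro hcon
        have : ((p:ℕ):ℤ) ∣ ((m:ℕ):ℤ) := by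
          rw [← PadicInt.norm_int_lt_one_iff_dvd]
          exact_mod_cast hcon
        exact hndvd (by exact_mod_cast this)
      exact (lt_or_eq_of_le hle).resolve_left hlt
    obtain ⟨c2, hc2⟩ := (hmunit.dvd : ((m:ℕ):ℤ_[p]) ∣ c)
    refine ⟨c2, ?_⟩
    have : u p - z n p = ((p:ℕ):ℤ_[p])^k * ((m:ℕ):ℤ_[p]) * c2 := by
      rw [mul_assoc, ← hc2, hc]
    rw [sub_apply, this, ← hnm]
    push_cast
    ring
  obtain ⟨w, hw⟩ := Classical.axiom_of_choice main
  refine ⟨(w : Π p : Nat.Primes, ℤ_[p]), ?_⟩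
  apply zhat_ext
  intro p
  rw [hw p]
  exact (nsmul_eq_mul _ _).symm

end ZhatAux

namespace RatMod
variable {M : Type} [AddCommGroup M]

lemma num_eq (q : ℚ) : (q.num : ℚ) = q * q.den := by
  have h : (q.den : ℚ) ≠ 0 := by exact_mod_cast q.den_nz
  exact (div_eq_iff h).mp (Rat.num_div_den q)

lemma tf_int (htf : ∀ (n : ℕ) (x : M), 0 < n → n • x = 0 → x = 0)
    (n : ℤ) (hn : n ≠ 0) (x : M) (h : n • x = 0) : x = 0 := by
  rcases lt_or_gt_of_ne hn with h1 | h1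
  · have : (-n).toNat • x = 0 := by
      rw [← natCast_zsmul, Int.toNat_of_nonneg (by omega)]
      simpa using h
    exact htf _ _ (by omega) this
  · have : n.toNat • x = 0 := by
      rw [← natCast_zsmul, Int.toNat_of_nonneg (by omega)]; exact h
    exact htf _ _ (by omega) this

lemma inj_int (htf : ∀ (n : ℕ) (x : M), 0 < n → n • x = 0 → x = 0)
    (n : ℤ) (hn : n ≠ 0) {x y : M} (h : n • x = n • y) : x = y := by
  have h2 : n • (x - y) = 0 := by rw [smul_sub, h, sub_self]
  have := tf_int htf n hn _ h2
  rw [sub_eq_zero] at this; exact this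

lemma inj_nat (htf : ∀ (n : ℕ) (x : M), 0 < n → n • x = 0 → x = 0)
    (n : ℕ) (hn : 0 < n) {x y : M} (h : n • x = n • y) : x = y := by
  apply inj_int htf (n : ℤ) (by exact_mod_cast hn.ne')
  rw [natCast_zsmul, natCast_zsmul]; exact h

noncomputable def qsmul (hdiv : ∀ n : ℕ, 0 < n → ∀ h : M, ∃ x : M, n • x = h)
    (q : ℚ) (x : M) : M := q.num • Classical.choose (hdiv q.den q.pos x)

lemma qsmul_char (hdiv : ∀ n : ℕ, 0 < n → ∀ h : M, ∃ x : M, n • x = h)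
    (q : ℚ) (x : M) : (q.den : ℤ) • qsmul hdiv q x = q.num • x := by
  have h := Classical.choose_spec (hdiv q.den q.pos x)
  rw [qsmul, smul_comm, natCast_zsmul, h]

lemma qsmul_uniq (hdiv : ∀ n : ℕ, 0 < n → ∀ h : M, ∃ x : M, n • x = h)
    (htf : ∀ (n : ℕ) (x : M), 0 < n → n • x = 0 → x = 0)
    (a b : ℤ) (hb : b ≠ 0) (q : ℚ) (hq : (a : ℚ) = q * b) (x y : M)
    (h : b • y = a • x) : y = qsmul hdiv q x := by
  have key : (q.den : ℤ) * a = q.num * b := by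
    have : (((q.den : ℤ) * a : ℤ) : ℚ) = ((q.num * b : ℤ) : ℚ) := by
      push_cast
      rw [hq, num_eq q]; ring
    exact_mod_cast this
  have hden : (q.den : ℤ) ≠ 0 := by exact_mod_cast q.den_nz
  apply inj_int htf ((q.den : ℤ) * b) (mul_ne_zero hden hb)
  calc ((q.den : ℤ) * b) • y = (q.den : ℤ) • (b • y) := mul_smul _ _ _
    _ = (q.den : ℤ) • (a • x) := by rw [h]
    _ = ((q.den : ℤ) * a) • x := (mul_smul _ _ _).symm
    _ = (q.num * b) • x := by rw [key]
    _ = b • (q.num • x) := by rw [mul_comm, mul_smul]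
    _ = b • ((q.den : ℤ) • qsmul hdiv q x) := by rw [qsmul_char]
    _ = ((q.den : ℤ) * b) • qsmul hdiv q x := by rw [← mul_smul, mul_comm]

noncomputable def module (hdiv : ∀ n : ℕ, 0 < n → ∀ h : M, ∃ x : M, n • x = h)
    (htf : ∀ (n : ℕ) (x : M), 0 < n → n • x = 0 → x = 0) : Module ℚ M where
  smul := qsmul hdiv
  one_smul x := by
    refine (qsmul_uniq hdiv htf 1 1 one_ne_zero 1 (by norm_num) x x (by simp)).symm
  mul_smul q r x := by
    show qsmul hdiv (q * r) x = qsmul hdiv q (qsmul hdiv r x)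
    have hden : ((q.den : ℤ) * (r.den : ℤ)) ≠ 0 := by
      have h1 : (q.den : ℤ) ≠ 0 := by exact_mod_cast q.den_nz
      have h2 : (r.den : ℤ) ≠ 0 := by exact_mod_cast r.den_nz
      exact mul_ne_zero h1 h2
    refine (qsmul_uniq hdiv htf (q.num * r.num) ((q.den : ℤ) * (r.den : ℤ)) hden (q * r)
      (by push_cast; rw [num_eq q, num_eq r]; ring) x _ ?_).symm
    calc ((q.den : ℤ) * (r.den : ℤ)) • qsmul hdiv q (qsmul hdiv r x)
        = (r.den : ℤ) • ((q.den : ℤ) • qsmul hdiv q (qsmul hdiv r x)) := by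
          rw [← mul_smul, mul_comm]
      _ = (r.den : ℤ) • (q.num • qsmul hdiv r x) := by rw [qsmul_char]
      _ = q.num • ((r.den : ℤ) • qsmul hdiv r x) := smul_comm _ _ _
      _ = q.num • (r.num • x) := by rw [qsmul_char]
      _ = (q.num * r.num) • x := (mul_smul _ _ _).symm
  smul_zero q := by
    show qsmul hdiv q 0 = 0
    refine (qsmul_uniq hdiv htf q.num (q.den : ℤ) (by exact_mod_cast q.den_nz) q
      (num_eq q) 0 0 (by simp)).symm
  smul_add q x y := by
    show qsmul hdiv q (x + y) = qsmul hdiv q x + qsmul hdiv q y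
    refine (qsmul_uniq hdiv htf q.num (q.den : ℤ) (by exact_mod_cast q.den_nz) q
      (num_eq q) (x + y) _ ?_).symm
    rw [smul_add, smul_add, qsmul_char, qsmul_char]
  add_smul q r x := by
    show qsmul hdiv (q + r) x = qsmul hdiv q x + qsmul hdiv r x
    have hden : ((q.den : ℤ) * (r.den : ℤ)) ≠ 0 := by
      have h1 : (q.den : ℤ) ≠ 0 := by exact_mod_cast q.den_nz
      have h2 : (r.den : ℤ) ≠ 0 := by exact_mod_cast r.den_nz
      exact mul_ne_zero h1 h2
    refine (qsmul_uniq hdiv htf (q.num * r.den + r.num * q.den)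
      ((q.den : ℤ) * (r.den : ℤ)) hden (q + r)
      (by push_cast; rw [num_eq q, num_eq r]; ring) x _ ?_).symm
    rw [smul_add, add_smul]
    congr 1
    · calc ((q.den : ℤ) * (r.den : ℤ)) • qsmul hdiv q x
          = (r.den : ℤ) • ((q.den : ℤ) • qsmul hdiv q x) := by rw [← mul_smul, mul_comm]
        _ = (r.den : ℤ) • (q.num • x) := by rw [qsmul_char]
        _ = (q.num * r.den) • x := by rw [← mul_smul, mul_comm]
    · calc ((q.den : ℤ) * (r.den : ℤ)) • qsmul hdiv r x
          = (q.den : ℤ) • ((r.den : ℤ) • qsmul hdiv r x) := mul_smul _ _ _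
        _ = (q.den : ℤ) • (r.num • x) := by rw [qsmul_char]
        _ = (r.num * q.den) • x := by rw [← mul_smul, mul_comm]
  zero_smul x := by
    show qsmul hdiv 0 x = 0
    apply inj_int htf ((0:ℚ).den : ℤ) (by norm_num)
    rw [qsmul_char]; simp

end RatMod
section Lift
variable {T H G : Type} [AddCommGroup T] [AddCommGroup H] [AddCommGroup G]

open ZhatAux

/-- scalar helper : `n • ((n:ℚ)⁻¹ • x) = x` -/
lemma inv_smul_cancel' {M : Type} [AddCommGroup M] [Module ℚ M] (n : ℕ) (hn : 0 < n)
    (x : M) : n • (((n:ℚ))⁻¹ • x) = x := by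
  have hne : (n:ℚ) ≠ 0 := by exact_mod_cast hn.ne'
  rw [← Nat.cast_smul_eq_nsmul ℚ, smul_smul, mul_inv_cancel₀ hne, one_smul]

lemma smul_div_eq {M : Type} [AddCommGroup M] [Module ℚ M] (m c : ℕ) (hm : 0 < m)
    (hc : 0 < c) (x : M) : c • (((m*c : ℕ):ℚ))⁻¹ • x = ((m:ℚ))⁻¹ • x := by
  have hme : (m:ℚ) ≠ 0 := by exact_mod_cast hm.ne'
  have hce : (c:ℚ) ≠ 0 := by exact_mod_cast hc.ne'
  rw [← Nat.cast_smul_eq_nsmul ℚ, smul_smul]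
  congr 1
  push_cast
  field_simp

/-- Core lifting lemma: given the `G`-side exact sequence and a `ℚ`-module structure,
any element's "divisible system" lifts. -/
lemma lift_elt [Module ℚ H] [Module ℚ G]
    (hGtf : ∀ (n : ℕ) (x : G), 0 < n → n • x = 0 → x = 0)
    (iG : Zhat →+ G) (exH : H →+ T) (exG : G →+ T)
    (hiG : Function.Injective iG) (hexG : Function.Surjective exG)
    (hkerG : ∀ g : G, exG g = 0 ↔ g ∈ Set.range iG) (h : H) :
    ∃ g : G, ∀ q : ℚ, exG (q • g) = exH (q • h) := by
  obtain ⟨g0, hg0⟩ := hexG (exH h)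
  set ζ : ℕ → T := fun n => exG (((n:ℚ))⁻¹ • g0) - exH (((n:ℚ))⁻¹ • h) with hζ
  -- surjectivity of the "ε" map onto n-torsion
  have hzex : ∀ n : ℕ, ∃ z : Zhat, 0 < n → exG (((n:ℚ))⁻¹ • iG z) = - ζ n := by
    intro n
    by_cases hn : 0 < n
    · have hζtor : n • ζ n = 0 := by
        rw [hζ]
        simp only [smul_sub, ← map_nsmul, inv_smul_cancel' n hn, hg0, sub_self]
      obtain ⟨g', hg'⟩ := hexG (- ζ n)
      have h0 : exG (n • g') = 0 := by
        rw [map_nsmul, hg', smul_neg, hζtor, neg_zero]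
      obtain ⟨z, hz⟩ := (hkerG _).mp h0
      refine ⟨z, fun _ => ?_⟩
      have : ((n:ℚ))⁻¹ • iG z = g' := by
        apply RatMod.inj_nat hGtf n hn
        rw [inv_smul_cancel' n hn, hz]
      rw [this, hg']
    · exact ⟨0, fun hc => absurd hc hn⟩
  choose zf hzf using hzex
  -- compatibility
  have hcompat : ∀ m n : ℕ, 0 < m → 0 < n → m ∣ n → ∃ w : Zhat, zf n - zf m = m • w := by
    intro m n hm hn hdvd
    obtain ⟨c, rfl⟩ := hdvd
    have hc : 0 < c := Nat.pos_of_ne_zero (fun h0 => by simp [h0] at hn)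
    have key : ∀ {M : Type} [AddCommGroup M] [Module ℚ M] (x : M),
        c • ((((m*c:ℕ)):ℚ))⁻¹ • x = ((m:ℚ))⁻¹ • x := fun x => smul_div_eq m c hm hc x
    have hζcomp : c • ζ (m*c) = ζ m := by
      rw [hζ]
      simp only [smul_sub, ← map_nsmul, key]
    have hε : exG (((m:ℚ))⁻¹ • iG (zf (m*c))) = - ζ m := by
      rw [← key (iG (zf (m*c))), map_nsmul, hzf (m*c) hn, smul_neg, hζcomp]
    have h0 : exG (((m:ℚ))⁻¹ • iG (zf (m*c) - zf m)) = 0 := by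
      rw [map_sub, smul_sub, map_sub, hε, hzf m hm, sub_self]
    obtain ⟨u, hu⟩ := (hkerG _).mp h0
    refine ⟨u, ?_⟩
    apply hiG
    rw [map_nsmul, hu, inv_smul_cancel' m hm]
  obtain ⟨z, hzlim⟩ := ZhatAux.compatible_limit zf hcompat
  refine ⟨g0 + iG z, ?_⟩
  have main : ∀ n : ℕ, 0 < n → exG (((n:ℚ))⁻¹ • (g0 + iG z)) = exH (((n:ℚ))⁻¹ • h) := by
    intro n hn
    obtain ⟨w, hw⟩ := hzlim n hn
    have hzeq : z = zf n + n • w := by rw [← hw]; abel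
    have hsmul : ((n:ℚ))⁻¹ • iG z = ((n:ℚ))⁻¹ • iG (zf n) + iG w := by
      rw [hzeq, map_add, smul_add, map_nsmul]
      congr 1
      apply RatMod.inj_nat hGtf n hn
      rw [inv_smul_cancel' n hn, ← map_nsmul]
    have hiGw : exG (iG w) = 0 := (hkerG _).mpr ⟨w, rfl⟩
    rw [smul_add, map_add, hsmul, map_add, hiGw, add_zero, hzf n hn]
    show exG (((n:ℚ))⁻¹ • g0) + -(exG (((n:ℚ))⁻¹ • g0) - exH (((n:ℚ))⁻¹ • h)) = _
    rw [neg_sub, sub_eq_neg_add]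
    exact add_neg_cancel_left _ _
  intro q
  have hq : q = (q.num : ℚ) * ((q.den : ℚ))⁻¹ := by
    rw [← div_eq_mul_inv]
    exact (Rat.num_div_den q).symm
  rw [hq, mul_smul, mul_smul, Int.cast_smul_eq_zsmul, Int.cast_smul_eq_zsmul,
    map_zsmul, map_zsmul, main q.den q.pos]

/-- Lifting an entire homomorphism via a basis. -/
lemma lift_hom [Module ℚ H] [Module ℚ G]
    (hGtf : ∀ (n : ℕ) (x : G), 0 < n → n • x = 0 → x = 0)
    (iG : Zhat →+ G) (exH : H →+ T) (exG : G →+ T)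
    (hiG : Function.Injective iG) (hexG : Function.Surjective exG)
    (hkerG : ∀ g : G, exG g = 0 ↔ g ∈ Set.range iG) :
    ∃ φ : H →+ G, ∀ x : H, exG (φ x) = exH x := by
  have hex : ∀ i : Module.Basis.ofVectorSpaceIndex ℚ H, ∃ g : G, ∀ q : ℚ,
      exG (q • g) = exH (q • (Module.Basis.ofVectorSpace ℚ H) i) :=
    fun i => lift_elt hGtf iG exH exG hiG hexG hkerG _
  choose gf hgf using hex
  set B := Module.Basis.ofVectorSpace ℚ H with hB
  refine ⟨(B.constr ℚ gf).toAddMonoidHom, fun x => ?_⟩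
  show exG (B.constr ℚ gf x) = exH x
  rw [Module.Basis.constr_apply, map_finsuppSum]
  have : ((B.repr x).sum fun i c => exG (c • gf i)) =
      ((B.repr x).sum fun i c => exH (c • B i)) := by
    apply Finsupp.sum_congr
    intro i _
    exact hgf i _
  rw [this, ← map_finsuppSum]
  congr 1
  have := B.linearCombination_repr x
  rwa [Finsupp.linearCombination_apply] at this

end Lift

/-- If `0 → Ẑ → H → Fˣ → 1` and `0 → Ẑ → G → Fˣ → 1` are exact sequences
of abelian groups with `H`, `G` divisible and torsion-free and `F` an algebraically
closed field of characteristic `0`, then there is a group isomorphism `σ : H ≃ G` with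
`ex_H = ex_G ∘ σ`. -/
theorem cover_with_compact_kernel_unique
    {F : Type} [Field F] [IsAlgClosed F] [CharZero F]
    {H G : Type} [AddCommGroup H] [AddCommGroup G]
    (hHdiv : ∀ n : ℕ, 0 < n → ∀ h : H, ∃ x : H, n • x = h)
    (hGdiv : ∀ n : ℕ, 0 < n → ∀ g : G, ∃ x : G, n • x = g)
    (hHtf : ∀ (n : ℕ) (x : H), 0 < n → n • x = 0 → x = 0)
    (hGtf : ∀ (n : ℕ) (x : G), 0 < n → n • x = 0 → x = 0)
    (iH : Zhat →+ H) (exH : H →+ Additive Fˣ)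
    (iG : Zhat →+ G) (exG : G →+ Additive Fˣ)
    (hiH : Function.Injective iH) (hexH : Function.Surjective exH)
    (hkerH : ∀ h : H, exH h = 0 ↔ h ∈ Set.range iH)
    (hiG : Function.Injective iG) (hexG : Function.Surjective exG)
    (hkerG : ∀ g : G, exG g = 0 ↔ g ∈ Set.range iG) :
    ∃ σ : H ≃+ G, ∀ h : H, exG (σ h) = exH h := by
  letI : Module ℚ H := RatMod.module hHdiv hHtf
  letI : Module ℚ G := RatMod.module hGdiv hGtf
  obtain ⟨φ, hφ⟩ := lift_hom hGtf iG exH exG hiG hexG hkerG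
  obtain ⟨ψ, hψ⟩ := lift_hom hHtf iH exG exH hiH hexH hkerH
  have hleft : ∀ x : H, ψ (φ x) = x := by
    have hker : ∀ x : H, ∃ z : Zhat, iH z = ψ (φ x) - x := by
      intro x
      have h0 : exH (ψ (φ x) - x) = 0 := by rw [map_sub, hψ, hφ, sub_self]
      exact (hkerH _).mp h0
    choose zf hzf using hker
    intro x
    have hz0 : zf x = 0 := by
      apply ZhatAux.eq_zero_of_forall_dvd
      intro n hn
      obtain ⟨y, hy⟩ := hHdiv n hn x
      refine ⟨zf y, ?_⟩
      apply hiH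
      rw [hzf x, map_nsmul iH, hzf y, smul_sub, ← map_nsmul ψ, ← map_nsmul φ, hy]
    have h0 := hzf x
    rw [hz0, map_zero, eq_comm, sub_eq_zero] at h0
    exact h0
  have hright : ∀ y : G, φ (ψ y) = y := by
    have hker : ∀ y : G, ∃ z : Zhat, iG z = φ (ψ y) - y := by
      intro y
      have h0 : exG (φ (ψ y) - y) = 0 := by rw [map_sub, hφ, hψ, sub_self]
      exact (hkerG _).mp h0
    choose zf hzf using hker
    intro y
    have hz0 : zf y = 0 := by
      apply ZhatAux.eq_zero_of_forall_dvd
      intro n hn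
      obtain ⟨x, hx⟩ := hGdiv n hn y
      refine ⟨zf x, ?_⟩
      apply hiG
      rw [hzf y, map_nsmul iG, hzf x, smul_sub, ← map_nsmul φ, ← map_nsmul ψ, hx]
    have h0 := hzf y
    rw [hz0, map_zero, eq_comm, sub_eq_zero] at h0
    exact h0
  exact ⟨{ toFun := φ, invFun := ψ, left_inv := hleft, right_inv := hright,
           map_add' := φ.map_add }, fun h => hφ h⟩
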